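/- Let K be a field, n ≥ 7, ζ ∈ K a primitive n-th root of unity, and A, B ∈ K[τ] polynomials satisfying A(ζτ) = ζ⁴·A(τ) and B(ζτ) = ζ⁶·B(τ). Then τ⁴ divides A and τ⁶ divides B. (Hence the Weierstrass equation y² = x³ + A(τ)x + B(τ) is not minimal, so the automorphism σ_n: (x,y,τ) ↦ (ζ²x, ζ³y, ζτ) can only occur on a minimal elliptic fibration when n ≤ 6.) -/

import Mathlib

open Polynomial

lemma coeff_comp_C_mul_X' {K : Type*} [CommRing K] (p : Polynomial K) (ζ : K) (i : ℕ) :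
    (p.comp (C ζ * X)).coeff i = ζ ^ i * p.coeff i := by
  induction p using Polynomial.induction_on' with
  | add p q hp hq => simp [hp, hq, mul_add]
  | monomial k a =>
    rw [monomial_comp, mul_pow, ← C_pow, ← mul_assoc, ← C_mul, C_mul_X_pow_eq_monomial]
    simp only [coeff_monomial]
    split_ifs with h
    · subst h; ring
    · ring

lemma key {K : Type*} [Field K] (n m : ℕ) (hmn : m < n) (ζ : K)
    (hζ : IsPrimitiveRoot ζ n) (A : Polynomial K)
    (hA : A.comp (C ζ * X) = C (ζ ^ m) * A) : X ^ m ∣ A := by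
  rw [X_pow_dvd_iff]
  intro d hd
  have h := congrArg (fun p => Polynomial.coeff p d) hA
  simp only [coeff_comp_C_mul_X', coeff_C_mul] at h
  by_contra hc
  have : ζ ^ d = ζ ^ m := by
    field_simp at h
    exact h
  exact absurd (hζ.pow_inj (hd.trans hmn) hmn this) (Nat.ne_of_lt hd)

/-- For a field `K`, `n ≥ 7`, `ζ ∈ K` a primitive `n`-th root of unity, and
polynomials `A, B ∈ K[τ]` with `A(ζτ) = ζ⁴·A(τ)` and `B(ζτ) = ζ⁶·B(τ)`, one has
`τ⁴ ∣ A` and `τ⁶ ∣ B`; hence the Weierstrass equation `y² = x³ + A(τ)x + B(τ)` is not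
minimal, so `σ_n` occurs on a minimal elliptic fibration only when `n ≤ 6`. -/
theorem stmt7 {K : Type*} [Field K] (n : ℕ) (hn : 7 ≤ n) (ζ : K)
    (hζ : IsPrimitiveRoot ζ n) (A B : Polynomial K)
    (hA : A.comp (C ζ * X) = C (ζ ^ 4) * A)
    (hB : B.comp (C ζ * X) = C (ζ ^ 6) * B) :
    X ^ 4 ∣ A ∧ X ^ 6 ∣ B :=
  ⟨key n 4 (by omega) ζ hζ A hA, key n 6 (by omega) ζ hζ B hB⟩
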